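/- Suppose M₀M₁ ≠ M₁M₀ and (M₀ − r₀⁻¹)(M₁ − r₁⁻¹) = 0. Then: (i) every solution (K, f₀, f₁) of the simultaneous triangularization problem satisfies f₀·f₁ = −(r₀ − r₀⁻¹)(r₁ − r₁⁻¹) (in particular f₀ ≠ 0 and f₁ ≠ 0); and (ii) for every pair (f₀, f₁) ∈ ℂ² with f₀·f₁ = −(r₀ − r₀⁻¹)(r₁ − r₁⁻¹) there exists K ∈ SL(2,ℂ) with K·M₀ = M₀Δ·K and K·M₁ = M₁Δ·K. -/

import Mathlib

open Matrix Complex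

theorem stmt12 (M₀ M₁ : Matrix (Fin 2) (Fin 2) ℂ)
    (hM₀ : M₀.det = 1) (hM₁ : M₁.det = 1)
    (r₀ r₁ : ℂ)
    (hr₀0 : r₀ ≠ 0) (hr₀1 : r₀ ≠ 1) (hr₀m : r₀ ≠ -1)
    (hr₁0 : r₁ ≠ 0) (hr₁1 : r₁ ≠ 1) (hr₁m : r₁ ≠ -1)
    (htr₀ : M₀.trace = r₀ + r₀⁻¹) (htr₁ : M₁.trace = r₁ + r₁⁻¹)
    (hcomm : M₀ * M₁ ≠ M₁ * M₀)
    (h : (M₀ - r₀⁻¹ • (1 : Matrix (Fin 2) (Fin 2) ℂ)) * (M₁ - r₁⁻¹ • 1) = 0) :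
    (∀ (K : Matrix (Fin 2) (Fin 2) ℂ) (f₀ f₁ : ℂ), K.det = 1 →
      K * M₀ = !![r₀, f₀; 0, r₀⁻¹] * K →
      K * M₁ = !![r₁, 0; f₁, r₁⁻¹] * K →
      f₀ * f₁ = -((r₀ - r₀⁻¹) * (r₁ - r₁⁻¹))) ∧
    (∀ f₀ f₁ : ℂ, f₀ * f₁ = -((r₀ - r₀⁻¹) * (r₁ - r₁⁻¹)) →
      ∃ K : Matrix (Fin 2) (Fin 2) ℂ, K.det = 1 ∧
        K * M₀ = !![r₀, f₀; 0, r₀⁻¹] * K ∧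
        K * M₁ = !![r₁, 0; f₁, r₁⁻¹] * K) := by
  constructor
  · intro K f₀ f₁ hK h₀ h₁
    have hKu : IsUnit K.det := by rw [hK]; exact isUnit_one
    have hKinv : K * K⁻¹ = 1 := Matrix.mul_nonsing_inv K hKu
    have hi₀ : K * (M₀ - r₀⁻¹ • 1) = (!![r₀, f₀; 0, r₀⁻¹] - r₀⁻¹ • 1) * K := by
      rw [Matrix.mul_sub, Matrix.sub_mul, h₀, mul_smul_comm, smul_mul_assoc, Matrix.mul_one, Matrix.one_mul]
    have hi₁ : K * (M₁ - r₁⁻¹ • 1) = (!![r₁, 0; f₁, r₁⁻¹] - r₁⁻¹ • 1) * K := by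
      rw [Matrix.mul_sub, Matrix.sub_mul, h₁, mul_smul_comm, smul_mul_assoc, Matrix.mul_one, Matrix.one_mul]
    have hPK : (!![r₀, f₀; 0, r₀⁻¹] - r₀⁻¹ • 1) * (!![r₁, 0; f₁, r₁⁻¹] - r₁⁻¹ • 1) * K = 0 := by
      calc (!![r₀, f₀; 0, r₀⁻¹] - r₀⁻¹ • 1) * (!![r₁, 0; f₁, r₁⁻¹] - r₁⁻¹ • 1) * K
          = (!![r₀, f₀; 0, r₀⁻¹] - r₀⁻¹ • 1) * (K * (M₁ - r₁⁻¹ • 1)) := by rw [hi₁, Matrix.mul_assoc]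
        _ = (K * (M₀ - r₀⁻¹ • 1)) * (M₁ - r₁⁻¹ • 1) := by rw [hi₀, Matrix.mul_assoc]
        _ = K * ((M₀ - r₀⁻¹ • 1) * (M₁ - r₁⁻¹ • 1)) := by rw [Matrix.mul_assoc]
        _ = 0 := by rw [h, Matrix.mul_zero]
    have hP : (!![r₀, f₀; 0, r₀⁻¹] - r₀⁻¹ • 1) * (!![r₁, 0; f₁, r₁⁻¹] - r₁⁻¹ • 1) = 0 := by
      have h2 := congrArg (· * K⁻¹) hPK
      simpa [Matrix.mul_assoc, hKinv] using h2
    have h00 := Matrix.ext_iff.mpr hP 0 0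
    simp [Matrix.mul_apply, Fin.sum_univ_two, Matrix.sub_apply, Matrix.smul_apply, Matrix.one_apply] at h00
    linear_combination h00
  · intro f₀ f₁ hf
    have hr₀inv : r₀ * r₀⁻¹ = 1 := mul_inv_cancel₀ hr₀0
    have hr₁inv : r₁ * r₁⁻¹ = 1 := mul_inv_cancel₀ hr₁0
    have hr₀ne : r₀ - r₀⁻¹ ≠ 0 := by
      intro h0
      have h2 := sub_eq_zero.mp h0
      have h1 : (r₀ - 1) * (r₀ + 1) = 0 := by
        have h4 : r₀ * r₀ = 1 := by nth_rewrite 2 [h2]; exact hr₀inv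
        linear_combination h4
      rcases mul_eq_zero.mp h1 with h3 | h3
      · exact hr₀1 (by linear_combination h3)
      · exact hr₀m (by linear_combination h3)
    have hr₁ne : r₁ - r₁⁻¹ ≠ 0 := by
      intro h0
      have h2 := sub_eq_zero.mp h0
      have h1 : (r₁ - 1) * (r₁ + 1) = 0 := by
        have h4 : r₁ * r₁ = 1 := by nth_rewrite 2 [h2]; exact hr₁inv
        linear_combination h4
      rcases mul_eq_zero.mp h1 with h3 | h3
      · exact hr₁1 (by linear_combination h3)
      · exact hr₁m (by linear_combination h3)
    have hdet₀s : M₀ 0 0 * M₀ 1 1 - M₀ 0 1 * M₀ 1 0 = 1 := by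
      rw [Matrix.det_fin_two] at hM₀; exact hM₀
    have htr₀s : M₀ 0 0 + M₀ 1 1 = r₀ + r₀⁻¹ := by
      rw [Matrix.trace_fin_two] at htr₀; exact htr₀
    have hdet₁s : M₁ 0 0 * M₁ 1 1 - M₁ 0 1 * M₁ 1 0 = 1 := by
      rw [Matrix.det_fin_two] at hM₁; exact hM₁
    have htr₁s : M₁ 0 0 + M₁ 1 1 = r₁ + r₁⁻¹ := by
      rw [Matrix.trace_fin_two] at htr₁; exact htr₁
    obtain ⟨N₁, hN₁def⟩ : ∃ N, N = M₁ - r₁⁻¹ • (1 : Matrix (Fin 2) (Fin 2) ℂ) := ⟨_, rfl⟩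
    rw [← hN₁def] at h
    have hN₁00 : N₁ 0 0 = M₁ 0 0 - r₁⁻¹ := by rw [hN₁def]; simp
    have hN₁01 : N₁ 0 1 = M₁ 0 1 := by rw [hN₁def]; simp
    have hN₁10 : N₁ 1 0 = M₁ 1 0 := by rw [hN₁def]; simp
    have hN₁11 : N₁ 1 1 = M₁ 1 1 - r₁⁻¹ := by rw [hN₁def]; simp
    have hk₁ : N₁ * (M₁ - r₁ • 1) = 0 := by
      rw [hN₁def]
      ext k l
      fin_cases k <;> fin_cases l <;>
        simp [Matrix.mul_apply, Fin.sum_univ_two, Matrix.sub_apply,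
          Matrix.smul_apply, Matrix.one_apply, smul_eq_mul] <;>
        first
          | linear_combination M₁ 0 0 * htr₁s - hdet₁s + hr₁inv
          | linear_combination M₁ 0 1 * htr₁s
          | linear_combination M₁ 1 0 * htr₁s
          | linear_combination M₁ 1 1 * htr₁s - hdet₁s + hr₁inv
    have hA1 : N₁ * M₁ = r₁ • N₁ := by
      have h2 := hk₁
      rw [Matrix.mul_sub, mul_smul_comm, Matrix.mul_one, sub_eq_zero] at h2
      exact h2
    have hA2 : N₁ * N₁ = (r₁ - r₁⁻¹) • N₁ := by
      have h3 : N₁ * N₁ = r₁ • N₁ - r₁⁻¹ • N₁ := by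
        nth_rewrite 2 [hN₁def]
        rw [Matrix.mul_sub, mul_smul_comm, Matrix.mul_one, hA1]
      rw [h3, sub_smul]
    have hA3 : M₀ * N₁ = r₀⁻¹ • N₁ := by
      have h2 := h
      rw [Matrix.sub_mul, smul_mul_assoc, Matrix.one_mul, sub_eq_zero] at h2
      exact h2
    have hdetN₁ : N₁ 0 0 * N₁ 1 1 - N₁ 0 1 * N₁ 1 0 = 0 := by
      rw [hN₁00, hN₁01, hN₁10, hN₁11]
      linear_combination hdet₁s - r₁⁻¹ * htr₁s - hr₁inv
    have hF4 : ∀ (k l i' j' : Fin 2), N₁ k l * N₁ i' j' = N₁ k j' * N₁ i' l := by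
      simp only [Fin.forall_fin_two]
      repeat' apply And.intro
      all_goals first | trivial | ring1 | linear_combination hdetN₁ | linear_combination -hdetN₁
    have hN₁ne : N₁ ≠ 0 := by
      intro h0
      apply hcomm
      rw [hN₁def] at h0
      have hM₁e : M₁ = r₁⁻¹ • (1 : Matrix (Fin 2) (Fin 2) ℂ) := by
        have := sub_eq_zero.mp h0
        simpa using this
      rw [hM₁e, mul_smul_comm, smul_mul_assoc, Matrix.mul_one, Matrix.one_mul]
    obtain ⟨i, j, hm⟩ : ∃ i j, N₁ i j ≠ 0 := by
      by_contra hc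
      push_neg at hc
      exact hN₁ne (by ext i j; simpa using hc i j)
    have hu : ∀ l, N₁ i 0 * M₁ 0 l + N₁ i 1 * M₁ 1 l = r₁ * N₁ i l := by
      intro l
      have h2 := Matrix.ext_iff.mpr hA1 i l
      simpa [Matrix.mul_apply, Fin.sum_univ_two] using h2
    have hx : ∀ k, M₀ k 0 * N₁ 0 j + M₀ k 1 * N₁ 1 j = r₀⁻¹ * N₁ k j := by
      intro k
      have h2 := Matrix.ext_iff.mpr hA3 k j
      simpa [Matrix.mul_apply, Fin.sum_univ_two] using h2
    have hux : N₁ i 0 * N₁ 0 j + N₁ i 1 * N₁ 1 j = (r₁ - r₁⁻¹) * N₁ i j := by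
      have h2 := Matrix.ext_iff.mpr hA2 i j
      simpa [Matrix.mul_apply, Fin.sum_univ_two] using h2
    have hC00 : M₀ 0 0 * M₀ 0 0 + M₀ 0 1 * M₀ 1 0 = (r₀ + r₀⁻¹) * M₀ 0 0 - 1 := by
      linear_combination M₀ 0 0 * htr₀s - hdet₀s
    have hC01 : M₀ 0 0 * M₀ 0 1 + M₀ 0 1 * M₀ 1 1 = (r₀ + r₀⁻¹) * M₀ 0 1 := by
      linear_combination M₀ 0 1 * htr₀s
    have hC10 : M₀ 1 0 * M₀ 0 0 + M₀ 1 1 * M₀ 1 0 = (r₀ + r₀⁻¹) * M₀ 1 0 := by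
      linear_combination M₀ 1 0 * htr₀s
    have hC11 : M₀ 1 0 * M₀ 0 1 + M₀ 1 1 * M₀ 1 1 = (r₀ + r₀⁻¹) * M₀ 1 1 - 1 := by
      linear_combination M₀ 1 1 * htr₀s - hdet₀s
    have hv0 : (N₁ i 0 * M₀ 0 0 + N₁ i 1 * M₀ 1 0 - r₀ * N₁ i 0) * M₀ 0 0
        + (N₁ i 0 * M₀ 0 1 + N₁ i 1 * M₀ 1 1 - r₀ * N₁ i 1) * M₀ 1 0
        = r₀⁻¹ * (N₁ i 0 * M₀ 0 0 + N₁ i 1 * M₀ 1 0 - r₀ * N₁ i 0) := by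
      linear_combination N₁ i 0 * hC00 + N₁ i 1 * hC10 + N₁ i 0 * hr₀inv
    have hv1 : (N₁ i 0 * M₀ 0 0 + N₁ i 1 * M₀ 1 0 - r₀ * N₁ i 0) * M₀ 0 1
        + (N₁ i 0 * M₀ 0 1 + N₁ i 1 * M₀ 1 1 - r₀ * N₁ i 1) * M₀ 1 1
        = r₀⁻¹ * (N₁ i 0 * M₀ 0 1 + N₁ i 1 * M₀ 1 1 - r₀ * N₁ i 1) := by
      linear_combination N₁ i 0 * hC01 + N₁ i 1 * hC11 + N₁ i 1 * hr₀inv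
    have hvx : (N₁ i 0 * M₀ 0 0 + N₁ i 1 * M₀ 1 0 - r₀ * N₁ i 0) * N₁ 0 j
        + (N₁ i 0 * M₀ 0 1 + N₁ i 1 * M₀ 1 1 - r₀ * N₁ i 1) * N₁ 1 j
        = (r₀⁻¹ - r₀) * ((r₁ - r₁⁻¹) * N₁ i j) := by
      linear_combination N₁ i 0 * hx 0 + N₁ i 1 * hx 1 + (r₀⁻¹ - r₀) * hux
    have hdel : N₁ i 0 * (N₁ i 0 * M₀ 0 1 + N₁ i 1 * M₀ 1 1 - r₀ * N₁ i 1)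
        - N₁ i 1 * (N₁ i 0 * M₀ 0 0 + N₁ i 1 * M₀ 1 0 - r₀ * N₁ i 0) ≠ 0 := by
      intro hd
      have hzx : (N₁ i 0 * M₀ 0 0 + N₁ i 1 * M₀ 1 0 - r₀⁻¹ * N₁ i 0) * N₁ 0 j
          + (N₁ i 0 * M₀ 0 1 + N₁ i 1 * M₀ 1 1 - r₀⁻¹ * N₁ i 1) * N₁ 1 j = 0 := by
        linear_combination N₁ i 0 * hx 0 + N₁ i 1 * hx 1
      have huz : N₁ i 0 * (N₁ i 0 * M₀ 0 1 + N₁ i 1 * M₀ 1 1 - r₀⁻¹ * N₁ i 1)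
          - N₁ i 1 * (N₁ i 0 * M₀ 0 0 + N₁ i 1 * M₀ 1 0 - r₀⁻¹ * N₁ i 0) = 0 := by
        linear_combination hd
      have hux0 : N₁ i 0 * N₁ 0 j + N₁ i 1 * N₁ 1 j ≠ 0 := by
        rw [hux]; exact mul_ne_zero hr₁ne hm
      have hz0 : N₁ i 0 * M₀ 0 0 + N₁ i 1 * M₀ 1 0 - r₀⁻¹ * N₁ i 0 = 0 := by
        have h3 : (N₁ i 0 * N₁ 0 j + N₁ i 1 * N₁ 1 j)
            * (N₁ i 0 * M₀ 0 0 + N₁ i 1 * M₀ 1 0 - r₀⁻¹ * N₁ i 0) = 0 := by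
          linear_combination N₁ i 0 * hzx - N₁ 1 j * huz
        exact (mul_eq_zero.mp h3).resolve_left hux0
      have hz1 : N₁ i 0 * M₀ 0 1 + N₁ i 1 * M₀ 1 1 - r₀⁻¹ * N₁ i 1 = 0 := by
        have h3 : (N₁ i 0 * N₁ 0 j + N₁ i 1 * N₁ 1 j)
            * (N₁ i 0 * M₀ 0 1 + N₁ i 1 * M₀ 1 1 - r₀⁻¹ * N₁ i 1) = 0 := by
          linear_combination N₁ i 1 * hzx + N₁ 0 j * huz
        exact (mul_eq_zero.mp h3).resolve_left hux0
      have hzl : ∀ l, N₁ i 0 * M₀ 0 l + N₁ i 1 * M₀ 1 l = r₀⁻¹ * N₁ i l := by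
        simp only [Fin.forall_fin_two]
        constructor
        · linear_combination hz0
        · linear_combination hz1
      have hNM : N₁ * M₀ = r₀⁻¹ • N₁ := by
        ext k l
        apply mul_left_cancel₀ hm
        simp only [Matrix.mul_apply, Fin.sum_univ_two, Matrix.smul_apply, smul_eq_mul]
        linear_combination M₀ 0 l * hF4 k 0 i j + M₀ 1 l * hF4 k 1 i j
          + N₁ k j * hzl l - r₀⁻¹ * hF4 k l i j
      apply hcomm
      have hM₁e : M₁ = N₁ + r₁⁻¹ • 1 := by rw [hN₁def]; abel
      rw [hM₁e, Matrix.mul_add, Matrix.add_mul, hA3, hNM, mul_smul_comm, smul_mul_assoc,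
        Matrix.mul_one, Matrix.one_mul]
    have hvN : ∀ l, (N₁ i 0 * M₀ 0 0 + N₁ i 1 * M₀ 1 0 - r₀ * N₁ i 0) * N₁ 0 l
        + (N₁ i 0 * M₀ 0 1 + N₁ i 1 * M₀ 1 1 - r₀ * N₁ i 1) * N₁ 1 l
        = (r₀⁻¹ - r₀) * ((r₁ - r₁⁻¹) * N₁ i l) := by
      intro l
      apply mul_left_cancel₀ hm
      linear_combination (N₁ i 0 * M₀ 0 0 + N₁ i 1 * M₀ 1 0 - r₀ * N₁ i 0) * hF4 0 l i j
        + (N₁ i 0 * M₀ 0 1 + N₁ i 1 * M₀ 1 1 - r₀ * N₁ i 1) * hF4 1 l i j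
        + N₁ i l * hvx
    have hf₀ : f₀ ≠ 0 := by
      intro h0
      apply mul_ne_zero hr₀ne hr₁ne
      rw [h0, zero_mul] at hf
      linear_combination hf
    obtain ⟨lam, mu, hlm, hfm⟩ : ∃ lam mu : ℂ,
        lam * mu * (N₁ i 0 * (N₁ i 0 * M₀ 0 1 + N₁ i 1 * M₀ 1 1 - r₀ * N₁ i 1)
          - N₁ i 1 * (N₁ i 0 * M₀ 0 0 + N₁ i 1 * M₀ 1 0 - r₀ * N₁ i 0)) = 1
        ∧ lam = f₀ * mu := by
      obtain ⟨z, hz⟩ := IsAlgClosed.exists_pow_nat_eq (k := ℂ)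
        (f₀ / (N₁ i 0 * (N₁ i 0 * M₀ 0 1 + N₁ i 1 * M₀ 1 1 - r₀ * N₁ i 1)
          - N₁ i 1 * (N₁ i 0 * M₀ 0 0 + N₁ i 1 * M₀ 1 0 - r₀ * N₁ i 0))) zero_lt_two
      have hz2 : z * z * (N₁ i 0 * (N₁ i 0 * M₀ 0 1 + N₁ i 1 * M₀ 1 1 - r₀ * N₁ i 1)
          - N₁ i 1 * (N₁ i 0 * M₀ 0 0 + N₁ i 1 * M₀ 1 0 - r₀ * N₁ i 0)) = f₀ := by
        have h5 := (eq_div_iff hdel).mp hz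
        linear_combination h5
      have hz0 : z ≠ 0 := by
        intro h0
        rw [h0] at hz2
        apply hf₀
        linear_combination -hz2
      refine ⟨z, (z * (N₁ i 0 * (N₁ i 0 * M₀ 0 1 + N₁ i 1 * M₀ 1 1 - r₀ * N₁ i 1)
          - N₁ i 1 * (N₁ i 0 * M₀ 0 0 + N₁ i 1 * M₀ 1 0 - r₀ * N₁ i 0)))⁻¹, ?_, ?_⟩
      · field_simp
        rw [div_self]
        intro h0; apply hdel; linear_combination h0
      · rw [eq_comm, mul_inv_eq_iff_eq_mul₀ (mul_ne_zero hz0 hdel)]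
        linear_combination -hz2
    refine ⟨!![lam * N₁ i 0, lam * N₁ i 1;
        mu * (N₁ i 0 * M₀ 0 0 + N₁ i 1 * M₀ 1 0 - r₀ * N₁ i 0),
        mu * (N₁ i 0 * M₀ 0 1 + N₁ i 1 * M₀ 1 1 - r₀ * N₁ i 1)], ?_, ?_, ?_⟩
    · rw [Matrix.det_fin_two_of]
      linear_combination hlm
    · ext k l
      fin_cases k <;> fin_cases l <;>
        simp [Matrix.mul_apply, Fin.sum_univ_two]
      · linear_combination (N₁ i 0 * M₀ 0 0 + N₁ i 1 * M₀ 1 0 - r₀ * N₁ i 0) * hfm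
      · linear_combination (N₁ i 0 * M₀ 0 1 + N₁ i 1 * M₀ 1 1 - r₀ * N₁ i 1) * hfm
      · linear_combination mu * hv0
      · linear_combination mu * hv1
    · ext k l
      fin_cases k <;> fin_cases l <;>
        simp [Matrix.mul_apply, Fin.sum_univ_two]
      · linear_combination lam * hu 0
      · linear_combination lam * hu 1
      · linear_combination mu * hvN 0
          - mu * (N₁ i 0 * M₀ 0 0 + N₁ i 1 * M₀ 1 0 - r₀ * N₁ i 0) * hN₁00
          - mu * (N₁ i 0 * M₀ 0 1 + N₁ i 1 * M₀ 1 1 - r₀ * N₁ i 1) * hN₁10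
          - f₁ * N₁ i 0 * hfm - mu * N₁ i 0 * hf
      · linear_combination mu * hvN 1
          - mu * (N₁ i 0 * M₀ 0 0 + N₁ i 1 * M₀ 1 0 - r₀ * N₁ i 0) * hN₁01
          - mu * (N₁ i 0 * M₀ 0 1 + N₁ i 1 * M₀ 1 1 - r₀ * N₁ i 1) * hN₁11
          - f₁ * N₁ i 1 * hfm - mu * N₁ i 1 * hf
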